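/- In the linear transform model, let (μ_θ^{(n)}, σ_θ^{(n)}, μ_λ^{(n)}, σ_λ^{(n)}) be a sequence of variational Laplace fixed points. Then: (i) deterministically, for every n, |μ_θ^{(n)}| ≤ |ȳ_n|/|a| + |m_θ| where ȳ_n = (1/n)Σᵢ yᵢ (this follows from the fixed-point formula for μ_θ using only σ_λ^{(n)} ≥ 0 and exp(μ_λ^{(n)}) > 0); and (ii) the sequence μ_λ^{(n)} is bounded in probability, i.e. μ_λ^{(n)} = O_P(1). -/

import Mathlib

set_option maxHeartbeats 1000000

open MeasureTheory ProbabilityTheory Filter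
open scoped NNReal ENNReal Real

/-- A variational Laplace fixed point for the linear transform model
`p(y|θ,λ) = N(y; aθ, exp λ)` with Gaussian priors `N(m_θ, s_θ²)`, `N(m_λ, s_λ²)`,
for sample size `n` and sample `ys 0, …, ys (n-1)`. -/
def IsVLFixedPoint (a mθ sθ ml sl : ℝ) (n : ℕ) (ys : ℕ → ℝ)
    (μθ σθ μl σl : ℝ) : Prop :=
  0 < σθ ∧ 0 < σl ∧
  μθ = (a * (1 + σl / 2) * ((∑ i ∈ Finset.range n, ys i) / n)
        + Real.exp μl * mθ / (n * sθ ^ 2))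
      / (a ^ 2 * (1 + σl / 2) + Real.exp μl / (n * sθ ^ 2)) ∧
  σθ = Real.exp μl * sθ ^ 2 / (a ^ 2 * n * sθ ^ 2 + Real.exp μl) ∧
  Real.exp μl * (2 * (μl - ml) / sl ^ 2 + n)
    = (∑ i ∈ Finset.range n, (ys i - a * μθ) ^ 2) + a ^ 2 * n * σθ ∧
  σl = 2 * Real.exp μl * sl ^ 2
      / ((∑ i ∈ Finset.range n, (ys i - a * μθ) ^ 2) * sl ^ 2 + 2 * Real.exp μl)

lemma det1 (a mθ sθ μl σl : ℝ) (ha : a ≠ 0) (hsθ : 0 < sθ) (n : ℕ) (ys : ℕ → ℝ) {μθ : ℝ}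
    (hσl : 0 < σl)
    (hμθ : μθ = (a * (1 + σl / 2) * ((∑ i ∈ Finset.range n, ys i) / n)
        + Real.exp μl * mθ / (n * sθ ^ 2))
      / (a ^ 2 * (1 + σl / 2) + Real.exp μl / (n * sθ ^ 2))) :
    |μθ| ≤ |(∑ i ∈ Finset.range n, ys i) / n| / |a| + |mθ| := by
  have ha' : 0 < |a| := abs_pos.mpr ha
  have ht : (0:ℝ) < 1 + σl / 2 := by linarith
  rcases Nat.eq_zero_or_pos n with hn | hn
  · subst hn
    have h0 : μθ = 0 := by rw [hμθ]; norm_num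
    rw [h0, abs_zero]
    positivity
  have hnpos : (0:ℝ) < n := by exact_mod_cast hn
  set yb := (∑ i ∈ Finset.range n, ys i) / (n:ℝ) with hyb
  have hd : 0 < Real.exp μl / (n * sθ ^ 2) := by positivity
  set d := Real.exp μl / ((n:ℝ) * sθ ^ 2) with hdd
  set t := 1 + σl / 2 with htt
  have hDen : 0 < a ^ 2 * t + d := by positivity
  have h1 : |a * t * yb + Real.exp μl * mθ / (n * sθ ^ 2)| ≤ |a| * t * |yb| + d * |mθ| := by
    refine (abs_add_le _ _).trans ?_
    have e1 : |a * t * yb| = |a| * t * |yb| := by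
      rw [abs_mul, abs_mul, abs_of_pos ht]
    have e2 : |Real.exp μl * mθ / (n * sθ ^ 2)| = d * |mθ| := by
      rw [show Real.exp μl * mθ / ((n:ℝ) * sθ ^ 2) = d * mθ by rw [hdd]; ring,
        abs_mul, abs_of_pos hd]
    rw [e1, e2]
  rw [hμθ, abs_div, abs_of_pos hDen, div_le_iff₀ hDen]
  refine h1.trans ?_
  have h2 : |yb| / |a| * |a| = |yb| := div_mul_cancel₀ _ ha'.ne'
  have h3 : a ^ 2 = |a| ^ 2 := (sq_abs a).symm
  have h4 : |yb| / |a| * (a ^ 2 * t) = |a| * t * |yb| := by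
    have e : |yb| / |a| * (a ^ 2 * t) = (|yb| / |a| * |a|) * (|a| * t) := by rw [h3]; ring
    rw [e, h2]; ring
  nlinarith [h4, mul_nonneg (div_nonneg (abs_nonneg yb) ha'.le) hd.le,
    mul_nonneg (abs_nonneg mθ) (mul_nonneg (sq_nonneg a) ht.le)]

lemma det2 (a mθ sθ ml sl R v : ℝ) (ha : a ≠ 0) (hsθ : 0 < sθ) (hsl : 0 < sl)
    (hR : 1 ≤ R) (hv : 0 < v) (n : ℕ) (hn : 2 ≤ n) (ys : ℕ → ℝ) {μθ σθ μl σl : ℝ}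
    (hfix : IsVLFixedPoint a mθ sθ ml sl n ys μθ σθ μl σl)
    (hyb : |(∑ i ∈ Finset.range n, ys i) / n| ≤ R)
    (hQ : (∑ i ∈ Finset.range n, (ys i) ^ 2) / n ≤ R)
    (hvar : v ≤ (∑ i ∈ Finset.range n, (ys i) ^ 2) / n
      - ((∑ i ∈ Finset.range n, ys i) / n) ^ 2) :
    |μl| ≤ max (max |ml| |Real.log (2 * ((2 * R + |a| * |mθ|) ^ 2 + R))|) |Real.log v| := by
  obtain ⟨hσθ, hσl, hμθeq, hσθeq, hμleq, -⟩ := hfix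
  have hμθb := det1 a mθ sθ μl σl ha hsθ n ys hσl hμθeq
  have hn2 : (2:ℝ) ≤ n := by exact_mod_cast hn
  have hnpos : (0:ℝ) < n := by linarith
  have hE : 0 < Real.exp μl := Real.exp_pos μl
  set E := Real.exp μl with hEdef
  set yb := (∑ i ∈ Finset.range n, ys i) / (n:ℝ) with hybdef
  set Q := (∑ i ∈ Finset.range n, (ys i) ^ 2) / (n:ℝ) with hQdef
  set S := ∑ i ∈ Finset.range n, (ys i - a * μθ) ^ 2 with hSdef
  set B := 2 * R + |a| * |mθ| with hBdef
  set K := B ^ 2 + R with hKdef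
  clear_value E yb Q S B K
  have ha' : 0 < |a| := abs_pos.mpr ha
  have hK1 : 1 ≤ K := by rw [hKdef]; nlinarith [sq_nonneg B]
  have hK0 : (0:ℝ) < 2 * K := by linarith
  -- sums in terms of yb, Q
  have hsum : (∑ i ∈ Finset.range n, ys i) = n * yb := by
    rw [hybdef]; field_simp
  have hsumsq : (∑ i ∈ Finset.range n, (ys i) ^ 2) = n * Q := by
    rw [hQdef]; field_simp
  have hSid : S = n * ((Q - yb ^ 2) + (yb - a * μθ) ^ 2) := by
    have e0 : ∀ i ∈ Finset.range n,
        (ys i - a * μθ) ^ 2 = (ys i) ^ 2 - (2 * (a * μθ)) * ys i + (a * μθ) ^ 2 :=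
      fun i _ => by ring
    rw [hSdef, Finset.sum_congr rfl e0, Finset.sum_add_distrib, Finset.sum_sub_distrib,
      ← Finset.mul_sum, Finset.sum_const, Finset.card_range, nsmul_eq_mul, hsum, hsumsq]
    ring
  -- bound |yb - a μθ| ≤ B
  have haμθ : |yb - a * μθ| ≤ B := by
    have h1 : |yb - a * μθ| ≤ |yb| + |a| * |μθ| := by
      have := abs_add_le yb (-(a * μθ))
      simpa [sub_eq_add_neg, abs_mul] using this
    have h2 : |a| * (|yb| / |a| + |mθ|) = |yb| + |a| * |mθ| := by
      field_simp
    have h3 : |a| * |μθ| ≤ |yb| + |a| * |mθ| := by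
      calc |a| * |μθ| ≤ |a| * (|yb| / |a| + |mθ|) :=
            mul_le_mul_of_nonneg_left hμθb ha'.le
        _ = |yb| + |a| * |mθ| := h2
    rw [hBdef]; linarith
  have hSle : S ≤ n * K := by
    have h1 : (yb - a * μθ) ^ 2 ≤ B ^ 2 := by
      rw [← sq_abs (yb - a * μθ)]
      exact pow_le_pow_left₀ (abs_nonneg _) haμθ 2
    have h2 : (Q - yb ^ 2) + (yb - a * μθ) ^ 2 ≤ K := by
      rw [hKdef]; nlinarith [sq_nonneg yb]
    rw [hSid]
    exact mul_le_mul_of_nonneg_left h2 hnpos.le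
  have hSge : n * v ≤ S := by
    have h2 : v ≤ (Q - yb ^ 2) + (yb - a * μθ) ^ 2 := by
      nlinarith [sq_nonneg (yb - a * μθ)]
    rw [hSid]
    exact mul_le_mul_of_nonneg_left h2 hnpos.le
  have hσθ0 : 0 ≤ a ^ 2 * n * σθ := by positivity
  have hσθle : a ^ 2 * n * σθ ≤ E := by
    have hD : 0 < a ^ 2 * (n:ℝ) * sθ ^ 2 + E := by positivity
    rw [hσθeq, mul_div_assoc', div_le_iff₀ hD]
    nlinarith [mul_pos hE hE, mul_nonneg (mul_nonneg (sq_nonneg a) hnpos.le) (sq_nonneg sθ)]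
  clear hμθeq hσθeq hμθb haμθ hSid hsum hsumsq hSdef hQdef hybdef hyb hQ hvar hBdef hKdef
  -- upper bound
  have hup : μl ≤ max ml (Real.log (2 * K)) := by
    by_contra hcon
    push_neg at hcon
    rw [max_lt_iff] at hcon
    obtain ⟨hml, hlg⟩ := hcon
    have hEgt : 2 * K < E := by
      have h := Real.exp_lt_exp.mpr hlg
      rw [Real.exp_log hK0] at h
      rw [hEdef]; exact h
    have hfrac : 0 ≤ 2 * (μl - ml) / sl ^ 2 :=
      div_nonneg (by linarith) (sq_nonneg sl)
    have hEn : E * n ≤ S + a ^ 2 * n * σθ := by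
      rw [← hμleq]
      nlinarith [mul_nonneg hE.le hfrac]
    nlinarith [mul_pos (sub_pos.mpr hEgt) (by linarith : (0:ℝ) < (n:ℝ) - 1),
      mul_nonneg (by linarith : (0:ℝ) ≤ K) (by linarith : (0:ℝ) ≤ (n:ℝ) - 2)]
  -- lower bound
  have hlo : min ml (Real.log v) ≤ μl := by
    by_contra hcon
    push_neg at hcon
    rw [lt_min_iff] at hcon
    obtain ⟨hml, hlv⟩ := hcon
    have hEv : E < v := by
      have h := Real.exp_lt_exp.mpr hlv
      rw [Real.exp_log hv] at h
      rw [hEdef]; exact h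
    have hfrac : 2 * (μl - ml) / sl ^ 2 ≤ 0 :=
      div_nonpos_of_nonpos_of_nonneg (by linarith) (sq_nonneg sl)
    have hEn : S + a ^ 2 * n * σθ ≤ E * n := by
      rw [← hμleq]
      nlinarith [mul_nonpos_of_nonneg_of_nonpos hE.le hfrac]
    have h5 : E * n < v * n := mul_lt_mul_of_pos_right hEv hnpos
    have h6 : (n:ℝ) * v = v * n := mul_comm _ _
    linarith
  -- conclusion
  have hM1 : |ml| ≤ max (max |ml| |Real.log (2 * K)|) |Real.log v| :=
    (le_max_left _ _).trans (le_max_left _ _)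
  have hM2 : |Real.log (2 * K)| ≤ max (max |ml| |Real.log (2 * K)|) |Real.log v| :=
    (le_max_right _ _).trans (le_max_left _ _)
  have hM3 : |Real.log v| ≤ max (max |ml| |Real.log (2 * K)|) |Real.log v| :=
    le_max_right _ _
  rw [abs_le]
  constructor
  · refine le_trans (le_min ?_ ?_) hlo
    · linarith [neg_abs_le ml]
    · linarith [neg_abs_le (Real.log v)]
  · refine hup.trans (max_le ?_ ?_)
    · linarith [le_abs_self ml]
    · linarith [le_abs_self (Real.log (2 * K))]

lemma L1 {b : ℝ} (hb : 0 < b) :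
    Integrable (fun x : ℝ => x ^ 2 * Real.exp (-b * x ^ 2)) := by
  have hg := (integrable_exp_neg_mul_sq (half_pos hb)).const_mul (2 / b)
  refine hg.mono ?_ (ae_of_all _ fun x => ?_)
  · exact (Continuous.mul (by continuity) (by continuity)).aestronglyMeasurable
  · have h2 : x ^ 2 ≤ (2 / b) * Real.exp ((b / 2) * x ^ 2) := by
      have ht : (b / 2) * x ^ 2 ≤ Real.exp ((b / 2) * x ^ 2) := by
        have := Real.add_one_le_exp ((b / 2) * x ^ 2)
        linarith
      have hm := mul_le_mul_of_nonneg_left ht (by positivity : (0:ℝ) ≤ 2 / b)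
      have he : (2 / b) * ((b / 2) * x ^ 2) = x ^ 2 := by field_simp
      linarith
    have h3 : Real.exp ((b / 2) * x ^ 2) * Real.exp (-b * x ^ 2)
        = Real.exp (-(b / 2) * x ^ 2) := by
      rw [← Real.exp_add]; ring_nf
    have key : x ^ 2 * Real.exp (-b * x ^ 2) ≤ (2 / b) * Real.exp (-(b / 2) * x ^ 2) := by
      calc x ^ 2 * Real.exp (-b * x ^ 2)
          ≤ (2 / b) * Real.exp ((b / 2) * x ^ 2) * Real.exp (-b * x ^ 2) :=
            mul_le_mul_of_nonneg_right h2 (Real.exp_pos _).le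
        _ = (2 / b) * Real.exp (-(b / 2) * x ^ 2) := by rw [mul_assoc, h3]
    rw [Real.norm_eq_abs, Real.norm_eq_abs, abs_of_nonneg (by positivity),
      abs_of_nonneg (by positivity)]
    exact key

lemma L2 {b : ℝ} (hb : 0 < b) (m : ℝ) :
    Integrable (fun x : ℝ => (x + m) * Real.exp (-b * x ^ 2)) := by
  have h := (integrable_mul_exp_neg_mul_sq hb).add
    ((integrable_exp_neg_mul_sq hb).const_mul m)
  exact h.congr (ae_of_all _ fun x => by simp only [Pi.add_apply]; ring)

lemma L3 {b : ℝ} (hb : 0 < b) (m : ℝ) :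
    Integrable (fun x : ℝ => (x + m) ^ 2 * Real.exp (-b * x ^ 2)) := by
  have h := ((L1 hb).add
    ((integrable_mul_exp_neg_mul_sq hb).const_mul (2 * m))).add
    ((integrable_exp_neg_mul_sq hb).const_mul (m ^ 2))
  exact h.congr (ae_of_all _ fun x => by simp only [Pi.add_apply]; ring)

lemma pdf_int1 (m : ℝ) {v : ℝ≥0} (hv : v ≠ 0) :
    Integrable (fun x : ℝ => x * gaussianPDFReal m v x) := by
  have hvpos : (0:ℝ) < v := by
    rcases (zero_le : (0 : ℝ≥0) ≤ v).lt_or_eq with h | h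
    · exact_mod_cast h
    · exact absurd h.symm hv
  have hb : (0:ℝ) < (2 * (v:ℝ))⁻¹ := by positivity
  have base := ((L2 hb m).const_mul ((Real.sqrt (2 * Real.pi * v))⁻¹)).comp_sub_right m
  refine base.congr (ae_of_all _ fun x => ?_)
  simp only [gaussianPDFReal]
  have hexp : Real.exp (-(2 * (v:ℝ))⁻¹ * (x - m) ^ 2)
      = Real.exp (-(x - m) ^ 2 / (2 * (v:ℝ))) := by
    congr 1
    field_simp
  rw [sub_add_cancel, hexp]
  ring

lemma pdf_int2 (m : ℝ) {v : ℝ≥0} (hv : v ≠ 0) :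
    Integrable (fun x : ℝ => x ^ 2 * gaussianPDFReal m v x) := by
  have hvpos : (0:ℝ) < v := by
    rcases (zero_le : (0 : ℝ≥0) ≤ v).lt_or_eq with h | h
    · exact_mod_cast h
    · exact absurd h.symm hv
  have hb : (0:ℝ) < (2 * (v:ℝ))⁻¹ := by positivity
  have base := ((L3 hb m).const_mul ((Real.sqrt (2 * Real.pi * v))⁻¹)).comp_sub_right m
  refine base.congr (ae_of_all _ fun x => ?_)
  simp only [gaussianPDFReal]
  have hexp : Real.exp (-(2 * (v:ℝ))⁻¹ * (x - m) ^ 2)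
      = Real.exp (-(x - m) ^ 2 / (2 * (v:ℝ))) := by
    congr 1
    field_simp
  rw [sub_add_cancel, hexp]
  ring

lemma gauss_int1 (m : ℝ) {v : ℝ≥0} (hv : v ≠ 0) :
    Integrable (fun x : ℝ => x) (gaussianReal m v) := by
  rw [gaussianReal_of_var_ne_zero m hv,
    integrable_withDensity_iff (measurable_gaussianPDF m v)
      (ae_of_all _ fun x => ENNReal.ofReal_lt_top)]
  refine (pdf_int1 m hv).congr (ae_of_all _ fun x => ?_)
  simp only [gaussianPDF, ENNReal.toReal_ofReal (gaussianPDFReal_nonneg _ _ _)]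

lemma gauss_int2 (m : ℝ) {v : ℝ≥0} (hv : v ≠ 0) :
    Integrable (fun x : ℝ => x ^ 2) (gaussianReal m v) := by
  rw [gaussianReal_of_var_ne_zero m hv,
    integrable_withDensity_iff (measurable_gaussianPDF m v)
      (ae_of_all _ fun x => ENNReal.ofReal_lt_top)]
  refine (pdf_int2 m hv).congr (ae_of_all _ fun x => ?_)
  simp only [gaussianPDF, ENNReal.toReal_ofReal (gaussianPDFReal_nonneg _ _ _)]

lemma gauss_var_pos (m : ℝ) {v : ℝ≥0} (hv : v ≠ 0) :
    (∫ x, x ∂(gaussianReal m v)) ^ 2 < ∫ x, x ^ 2 ∂(gaussianReal m v) := by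
  have hP : IsProbabilityMeasure (gaussianReal m v) := inferInstance
  set G := gaussianReal m v with hG
  set m1 := ∫ x, x ∂G with hm1
  have hint1 : Integrable (fun x : ℝ => x) G := gauss_int1 m hv
  have hint2 : Integrable (fun x : ℝ => x ^ 2) G := gauss_int2 m hv
  have hintc : Integrable (fun x : ℝ => (x - m1) ^ 2) G := by
    have h := (hint2.sub (hint1.const_mul (2 * m1))).add (integrable_const (m1 ^ 2))
    exact h.congr (ae_of_all _ fun x => by simp only [Pi.add_apply, Pi.sub_apply]; ring)
  have hexp : ∫ x, (x - m1) ^ 2 ∂G = (∫ x, x ^ 2 ∂G) - m1 ^ 2 := by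
    have he : (fun x : ℝ => (x - m1) ^ 2) = fun x => (x ^ 2 - (2 * m1) * x) + m1 ^ 2 :=
      funext fun x => by ring
    have hmul : Integrable (fun x : ℝ => (2 * m1) * x) G := hint1.const_mul (2 * m1)
    have hsub : Integrable (fun x : ℝ => x ^ 2 - (2 * m1) * x) G := hint2.sub hmul
    rw [he, integral_add hsub (integrable_const _), integral_sub hint2 hmul,
      integral_const_mul, integral_const]
    simp only [measure_univ, ENNReal.toReal_one, smul_eq_mul, one_mul, probReal_univ]
    rw [← hm1]; ring
  have hpos : 0 < ∫ x, (x - m1) ^ 2 ∂G := by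
    rw [integral_pos_iff_support_of_nonneg (fun x => sq_nonneg _) hintc]
    have hsupp : Function.support (fun x : ℝ => (x - m1) ^ 2) = {m1}ᶜ := by
      ext x
      simp [Function.mem_support, sub_eq_zero, pow_eq_zero_iff]
    rw [hsupp]
    by_contra h
    push_neg at h
    have h0 : G {m1}ᶜ = 0 := le_antisymm h zero_le
    have hvol : volume ({m1}ᶜ : Set ℝ) = 0 := (gaussianReal_absolutelyContinuous' m hv) h0
    have hsub : Set.Ioi m1 ⊆ ({m1}ᶜ : Set ℝ) := fun x hx => ne_of_gt hx
    have : volume (Set.Ioi m1) = 0 := le_antisymm (hvol ▸ measure_mono hsub) zero_le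
    rw [Real.volume_Ioi] at this
    exact ENNReal.top_ne_zero this
  linarith [hexp ▸ hpos]

/-- In the linear transform model, along any sequence of variational Laplace
fixed points: (i) deterministically, `|μ_θ⁽ⁿ⁾| ≤ |ȳₙ|/|a| + |m_θ|` for every `n`; and (ii) the
sequence `μ_λ⁽ⁿ⁾` is bounded in probability, i.e. `μ_λ⁽ⁿ⁾ = O_P(1)`. -/
theorem vl_means_bounded
    {Ω : Type*} [MeasurableSpace Ω] (P : Measure Ω) [IsProbabilityMeasure P]
    (a θ0 l0 mθ sθ ml sl : ℝ) (ha : a ≠ 0) (hsθ : 0 < sθ) (hsl : 0 < sl)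
    -- i.i.d. observations with law `N(a·θ0, exp λ0)`
    (y : ℕ → Ω → ℝ) (hmeas : ∀ i, Measurable (y i))
    (hindep : iIndepFun y P)
    (hlaw : ∀ i, Measure.map (y i) P
      = gaussianReal (a * θ0) ⟨Real.exp l0, (Real.exp_pos l0).le⟩)
    -- a sequence of variational Laplace fixed points
    (μθn σθn μln σln : ℕ → Ω → ℝ)
    (hfix : ∀ n ω, IsVLFixedPoint a mθ sθ ml sl n (fun i => y i ω)
      (μθn n ω) (σθn n ω) (μln n ω) (σln n ω)) :
    -- (i) deterministic bound on `μ_θ⁽ⁿ⁾`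
    (∀ (n : ℕ) ω,
      |μθn n ω| ≤ |(∑ i ∈ Finset.range n, y i ω) / n| / |a| + |mθ|) ∧
    -- (ii) `μ_λ⁽ⁿ⁾` is bounded in probability
    (∀ ε > 0, ∃ M : ℝ, ∃ N : ℕ, ∀ n ≥ N,
      P {ω | M < |μln n ω|} < ENNReal.ofReal ε) := by
  constructor
  · intro n ω
    exact det1 a mθ sθ (μln n ω) (σln n ω) ha hsθ n (fun i => y i ω)
      (hfix n ω).2.1 (hfix n ω).2.2.1
  -- part (ii)
  set v0 : ℝ≥0 := ⟨Real.exp l0, (Real.exp_pos l0).le⟩ with hv0def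
  have hv0 : v0 ≠ 0 := by
    intro h
    have h2 : (v0 : ℝ) = 0 := by rw [h]; simp
    rw [hv0def] at h2
    exact (Real.exp_pos l0).ne' h2
  set G := gaussianReal (a * θ0) v0 with hGdef
  set m1 := ∫ x, x ∂G with hm1def
  set m2 := ∫ x, x ^ 2 ∂G with hm2def
  have hvarpos : m1 ^ 2 < m2 := gauss_var_pos (a * θ0) hv0
  -- integrability under P
  have hyint : Integrable (y 0) P := by
    have h : Integrable (fun x : ℝ => x) (Measure.map (y 0) P) := by
      rw [hlaw 0]; exact gauss_int1 _ hv0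
    exact (integrable_map_measure measurable_id.aestronglyMeasurable
      (hmeas 0).aemeasurable).mp h
  have hy2int : Integrable (fun ω => (y 0 ω) ^ 2) P := by
    have h : Integrable (fun x : ℝ => x ^ 2) (Measure.map (y 0) P) := by
      rw [hlaw 0]; exact gauss_int2 _ hv0
    exact (integrable_map_measure (measurable_id.pow_const 2).aestronglyMeasurable
      (hmeas 0).aemeasurable).mp h
  -- identically distributed
  have hid : ∀ i, IdentDistrib (y i) (y 0) P P := fun i =>
    ⟨(hmeas i).aemeasurable, (hmeas 0).aemeasurable, by rw [hlaw i, hlaw 0]⟩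
  have hid2 : ∀ i, IdentDistrib (fun ω => (y i ω) ^ 2) (fun ω => (y 0 ω) ^ 2) P P :=
    fun i => (hid i).comp (measurable_id.pow_const 2)
  -- pairwise independence
  have hpind : Pairwise (Function.onFun (IndepFun · · P) y) := fun i j hij => hindep.indepFun hij
  have hpind2 : Pairwise (Function.onFun (IndepFun · · P) (fun i ω => (y i ω) ^ 2)) := fun i j hij =>
    (hindep.indepFun hij).comp (measurable_id.pow_const 2) (measurable_id.pow_const 2)
  -- strong law of large numbers
  have hEy : ∫ ω, y 0 ω ∂P = m1 := by
    rw [hm1def, ← hlaw 0]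
    exact (integral_map (hmeas 0).aemeasurable measurable_id.aestronglyMeasurable).symm
  have hEy2 : ∫ ω, (y 0 ω) ^ 2 ∂P = m2 := by
    rw [hm2def, ← hlaw 0]
    exact (integral_map (hmeas 0).aemeasurable
      (measurable_id.pow_const 2).aestronglyMeasurable).symm
  have hS1 := strong_law_ae_real y hyint hpind hid
  have hS2 := strong_law_ae_real (fun i ω => (y i ω) ^ 2) hy2int hpind2 hid2
  rw [hEy] at hS1
  rw [hEy2] at hS2
  -- convergence in measure
  have hmeasYb : ∀ n : ℕ, AEStronglyMeasurable
      (fun ω => (∑ i ∈ Finset.range n, y i ω) / (n:ℝ)) P := fun n =>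
    ((Finset.measurable_sum (Finset.range n) fun i _ => hmeas i).div_const _).aestronglyMeasurable
  have hmeasQb : ∀ n : ℕ, AEStronglyMeasurable
      (fun ω => (∑ i ∈ Finset.range n, (y i ω) ^ 2) / (n:ℝ)) P := fun n =>
    ((Finset.measurable_sum (Finset.range n)
      fun i _ => (hmeas i).pow_const 2).div_const _).aestronglyMeasurable
  have hT1 : TendstoInMeasure P
      (fun n ω => (∑ i ∈ Finset.range n, y i ω) / (n:ℝ)) atTop (fun _ => m1) :=
    tendstoInMeasure_of_tendsto_ae hmeasYb hS1
  have hT2 : TendstoInMeasure P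
      (fun n ω => (∑ i ∈ Finset.range n, (y i ω) ^ 2) / (n:ℝ)) atTop (fun _ => m2) :=
    tendstoInMeasure_of_tendsto_ae hmeasQb hS2
  -- choose constants
  intro ε hε
  set V := m2 - m1 ^ 2 with hVdef
  have hV : 0 < V := by rw [hVdef]; linarith
  set δ := min 1 (V / (2 * (2 * |m1| + 2))) with hδdef
  have hδ : 0 < δ := lt_min one_pos (by positivity)
  have hδ1 : δ ≤ 1 := min_le_left _ _
  have hδ2 : δ * (2 * |m1| + 2) ≤ V / 2 := by
    have hc : (0:ℝ) < 2 * |m1| + 2 := by positivity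
    have h := min_le_right 1 (V / (2 * (2 * |m1| + 2)))
    rw [← hδdef] at h
    have := mul_le_mul_of_nonneg_right h hc.le
    calc δ * (2 * |m1| + 2) ≤ V / (2 * (2 * |m1| + 2)) * (2 * |m1| + 2) := this
      _ = V / 2 := by field_simp
  set R := max 1 (max (|m1| + 1) (m2 + 1)) with hRdef
  have hR : 1 ≤ R := le_max_left _ _
  have hR1 : |m1| + 1 ≤ R := (le_max_left _ _).trans (le_max_right _ _)
  have hR2 : m2 + 1 ≤ R := (le_max_right _ _).trans (le_max_right _ _)
  set vv := V / 2 with hvvdef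
  have hvv : 0 < vv := by positivity
  refine ⟨max (max |ml| |Real.log (2 * ((2 * R + |a| * |mθ|) ^ 2 + R))|) |Real.log vv|, ?_⟩
  set M := max (max |ml| |Real.log (2 * ((2 * R + |a| * |mθ|) ^ 2 + R))|) |Real.log vv| with hMdef
  -- tail events small
  have hhalf : (0:ℝ≥0∞) < ENNReal.ofReal ε / 2 :=
    ENNReal.div_pos (ENNReal.ofReal_pos.mpr hε).ne' (by norm_num)
  have hev1 := (tendstoInMeasure_iff_dist.mp hT1 δ hδ).eventually_lt_const hhalf
  have hev2 := (tendstoInMeasure_iff_dist.mp hT2 δ hδ).eventually_lt_const hhalf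
  rw [eventually_atTop] at hev1 hev2
  obtain ⟨N1, hN1⟩ := hev1
  obtain ⟨N2, hN2⟩ := hev2
  refine ⟨max (max N1 N2) 2, fun n hn => ?_⟩
  have hnN1 : N1 ≤ n := le_trans ((le_max_left _ _).trans (le_max_left _ _)) hn
  have hnN2 : N2 ≤ n := le_trans ((le_max_right _ _).trans (le_max_left _ _)) hn
  have hn2 : 2 ≤ n := le_trans (le_max_right _ _) hn
  -- the inclusion
  have hsub : {ω | M < |μln n ω|} ⊆
      {ω | δ ≤ dist ((∑ i ∈ Finset.range n, y i ω) / (n:ℝ)) m1} ∪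
      {ω | δ ≤ dist ((∑ i ∈ Finset.range n, (y i ω) ^ 2) / (n:ℝ)) m2} := by
    intro ω hω
    by_contra hc
    simp only [Set.mem_union, Set.mem_setOf_eq, not_or, not_le] at hc
    obtain ⟨hc1, hc2⟩ := hc
    rw [Real.dist_eq] at hc1 hc2
    set Yb := (∑ i ∈ Finset.range n, y i ω) / (n:ℝ) with hYbdef
    set Qb := (∑ i ∈ Finset.range n, (y i ω) ^ 2) / (n:ℝ) with hQbdef
    have hYbR : |Yb| ≤ R := by
      have := abs_sub_abs_le_abs_sub Yb m1
      linarith [abs_lt.mp hc1, le_abs_self m1, neg_abs_le m1, this, hc1]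
    have hQbR : Qb ≤ R := by
      have := abs_lt.mp hc2
      linarith
    have hQbv : vv ≤ Qb - Yb ^ 2 := by
      have hw := abs_lt.mp hc1
      have hw2 : (Yb - m1) ^ 2 ≤ δ ^ 2 := by nlinarith
      have hδsq : δ ^ 2 ≤ δ := by nlinarith
      have h2m : m1 * (Yb - m1) ≤ |m1| * δ := by
        calc m1 * (Yb - m1) ≤ |m1 * (Yb - m1)| := le_abs_self _
          _ = |m1| * |Yb - m1| := abs_mul _ _
          _ ≤ |m1| * δ := mul_le_mul_of_nonneg_left hc1.le (abs_nonneg m1)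
      have hidd : Yb ^ 2 = m1 ^ 2 + 2 * (m1 * (Yb - m1)) + (Yb - m1) ^ 2 := by ring
      have hm12 : m1 ^ 2 ≤ |m1| * |m1| := by rw [← abs_mul, sq]; exact le_abs_self _
      rw [hvvdef]
      linarith [abs_lt.mp hc2]
    have hbound := det2 a mθ sθ ml sl R vv ha hsθ hsl hR hvv n hn2 (fun i => y i ω)
      (hfix n ω) hYbR hQbR hQbv
    rw [← hMdef] at hbound
    exact absurd hω (not_lt.mpr (by exact hbound))
  calc P {ω | M < |μln n ω|}
      ≤ P ({ω | δ ≤ dist ((∑ i ∈ Finset.range n, y i ω) / (n:ℝ)) m1} ∪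
          {ω | δ ≤ dist ((∑ i ∈ Finset.range n, (y i ω) ^ 2) / (n:ℝ)) m2}) :=
        measure_mono hsub
    _ ≤ P {ω | δ ≤ dist ((∑ i ∈ Finset.range n, y i ω) / (n:ℝ)) m1} +
        P {ω | δ ≤ dist ((∑ i ∈ Finset.range n, (y i ω) ^ 2) / (n:ℝ)) m2} :=
        measure_union_le _ _
    _ < ENNReal.ofReal ε / 2 + ENNReal.ofReal ε / 2 :=
        ENNReal.add_lt_add (hN1 n hnN1) (hN2 n hnN2)
    _ = ENNReal.ofReal ε := ENNReal.add_halves _
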